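/- Minimax value of the ensemble aggregation game (Theorem 2.2, value part): the minimax value V = min over g ∈ [−1,1]ⁿ of sup over z ∈ Z of ℓ(z,g) satisfies V = (1/2)·inf over σ ∈ ℝᵖ with σ ≥ 0 of γ(σ) = (1/2)·inf over σ ≥ 0 of [−bᵀσ + (1/n)·Σ_{j=1}^n Ψ(x_jᵀσ)]. -/

import Mathlib

open scoped BigOperators
open Pointwise

noncomputable def Psi (lp lm Γinv : ℝ → ℝ) (m : ℝ) : ℝ :=
  if m ≤ lm (-1) - lp (-1) then -m + 2 * lm (-1)
  else if m < lm 1 - lp 1 then lp (Γinv m) + lm (Γinv m)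
  else m + 2 * lp 1

noncomputable def lossV (lp lm : ℝ → ℝ) (n : ℕ) (z g : Fin n → ℝ) : ℝ :=
  (1 / (n : ℝ)) * ∑ j, ((1 + z j) / 2 * lp (g j) + (1 - z j) / 2 * lm (g j))

def ZSet (p n : ℕ) (F : Fin p → Fin n → ℝ) (b : Fin p → ℝ) : Set (Fin n → ℝ) :=
  {z | (∀ j, z j ∈ Set.Icc (-1:ℝ) 1) ∧ ∀ i, b i ≤ (1 / (n : ℝ)) * ∑ j, F i j * z j}

noncomputable def slack (lp lm Γinv : ℝ → ℝ) (p n : ℕ) (F : Fin p → Fin n → ℝ)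
    (b : Fin p → ℝ) (σ : Fin p → ℝ) : ℝ :=
  -(∑ i, b i * σ i) + (1 / (n : ℝ)) * ∑ j, Psi lp lm Γinv (∑ i, σ i * F i j)

lemma swap_sum {p n : ℕ} (σ : Fin p → ℝ) (F : Fin p → Fin n → ℝ) (z : Fin n → ℝ) :
    ∑ j, z j * (∑ i, σ i * F i j) = ∑ i, σ i * (∑ j, F i j * z j) := by
  simp_rw [Finset.mul_sum]
  rw [Finset.sum_comm]
  exact Finset.sum_congr rfl fun i _ => Finset.sum_congr rfl fun j _ => by ring

lemma lp_weak {p n : ℕ} (hn : 0 < n) (F : Fin p → Fin n → ℝ) (b : Fin p → ℝ)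
    (c : Fin n → ℝ) {z : Fin n → ℝ} {σ : Fin p → ℝ} (hz : z ∈ ZSet p n F b) (hσ : ∀ i, 0 ≤ σ i) :
    ∑ j, z j * c j ≤ -((n:ℝ) * ∑ i, b i * σ i) + ∑ j, |c j + ∑ i, σ i * F i j| := by
  obtain ⟨hzb, hzf⟩ := hz
  have hnR : (0:ℝ) < n := Nat.cast_pos.mpr hn
  have h1 : ∑ j, z j * c j
      = ∑ j, z j * (c j + ∑ i, σ i * F i j) - ∑ i, σ i * (∑ j, F i j * z j) := by
    rw [← swap_sum, ← Finset.sum_sub_distrib]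
    exact Finset.sum_congr rfl fun j _ => by ring
  have h2 : ∑ j, z j * (c j + ∑ i, σ i * F i j) ≤ ∑ j, |c j + ∑ i, σ i * F i j| := by
    refine Finset.sum_le_sum fun j _ => ?_
    have hz1 : |z j| ≤ 1 := abs_le.mpr ⟨(hzb j).1, (hzb j).2⟩
    calc z j * (c j + ∑ i, σ i * F i j) ≤ |z j * (c j + ∑ i, σ i * F i j)| := le_abs_self _
      _ = |z j| * |c j + ∑ i, σ i * F i j| := abs_mul _ _
      _ ≤ 1 * |c j + ∑ i, σ i * F i j| :=
          mul_le_mul_of_nonneg_right hz1 (abs_nonneg _)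
      _ = _ := one_mul _
  have h3 : (n:ℝ) * ∑ i, b i * σ i ≤ ∑ i, σ i * (∑ j, F i j * z j) := by
    rw [Finset.mul_sum]
    refine Finset.sum_le_sum fun i _ => ?_
    have hbi := hzf i
    have hS : (n:ℝ) * b i ≤ ∑ j, F i j * z j := by
      have h := mul_le_mul_of_nonneg_left hbi (le_of_lt hnR)
      rw [show (n:ℝ) * ((1/(n:ℝ)) * ∑ j, F i j * z j) = ∑ j, F i j * z j by
        field_simp] at h
      linarith
    calc (n:ℝ) * (b i * σ i) = ((n:ℝ) * b i) * σ i := by ring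
      _ ≤ (∑ j, F i j * z j) * σ i := mul_le_mul_of_nonneg_right hS (hσ i)
      _ = σ i * (∑ j, F i j * z j) := mul_comm _ _
  linarith

lemma lp_dual {p n : ℕ} (hn : 0 < n) (F : Fin p → Fin n → ℝ) (b : Fin p → ℝ)
    (c : Fin n → ℝ) (hZ : (ZSet p n F b).Nonempty) :
    sSup {w | ∃ z ∈ ZSet p n F b, w = ∑ j, z j * c j} =
      sInf {w | ∃ σ : Fin p → ℝ, (∀ i, 0 ≤ σ i) ∧
        w = -((n:ℝ) * ∑ i, b i * σ i) + ∑ j, |c j + ∑ i, σ i * F i j|} := by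
  classical
  obtain ⟨z₀, hz₀⟩ := hZ
  have hnR : (0:ℝ) < n := Nat.cast_pos.mpr hn
  set Prim := {w | ∃ z ∈ ZSet p n F b, w = ∑ j, z j * c j} with hPrimDef
  set Dual := {w | ∃ σ : Fin p → ℝ, (∀ i, 0 ≤ σ i) ∧
      w = -((n:ℝ) * ∑ i, b i * σ i) + ∑ j, |c j + ∑ i, σ i * F i j|} with hDualDef
  have hPne : Prim.Nonempty := ⟨_, z₀, hz₀, rfl⟩
  have hPbdd : BddAbove Prim := by
    refine ⟨∑ j, |c j|, ?_⟩
    rintro w ⟨z, hz, rfl⟩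
    refine Finset.sum_le_sum fun j _ => ?_
    have hz1 : |z j| ≤ 1 := abs_le.mpr ⟨(hz.1 j).1, (hz.1 j).2⟩
    calc z j * c j ≤ |z j * c j| := le_abs_self _
      _ = |z j| * |c j| := abs_mul _ _
      _ ≤ 1 * |c j| := mul_le_mul_of_nonneg_right hz1 (abs_nonneg _)
      _ = |c j| := one_mul _
  have hDne : Dual.Nonempty := ⟨_, 0, fun i => le_rfl, rfl⟩
  have hweak : ∀ w ∈ Prim, ∀ v ∈ Dual, w ≤ v := by
    rintro _ ⟨z, hz, rfl⟩ _ ⟨σ, hσ, rfl⟩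
    exact lp_weak hn F b c hz hσ
  have hDbdd : BddBelow Dual := ⟨∑ j, z₀ j * c j, fun v hv => hweak _ ⟨z₀, hz₀, rfl⟩ v hv⟩
  set P := sSup Prim with hPdef
  have hPmem : ∀ z ∈ ZSet p n F b, (∑ j, z j * c j) ≤ P := fun z hz => le_csSup hPbdd ⟨z, hz, rfl⟩
  -- strong duality: for each ε > 0 there is a dual point with value ≤ P + ε
  have hstrong : ∀ ε : ℝ, 0 < ε → ∃ w ∈ Dual, w ≤ P + ε := by
    intro ε hε
    set Box : Set (Fin n → ℝ) := Set.univ.pi fun _ => Set.Icc (-1:ℝ) 1 with hBoxDef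
    have hBoxmem : ∀ z : Fin n → ℝ, z ∈ Box ↔ ∀ j, z j ∈ Set.Icc (-1:ℝ) 1 := by
      intro z; simp [hBoxDef, Set.mem_pi, Pi.le_def, Set.mem_Icc, forall_and]
    have hBoxC : IsCompact Box := isCompact_univ_pi fun _ => isCompact_Icc
    have hBoxconv : Convex ℝ Box := convex_pi fun i _ => convex_Icc _ _
    set φ : (Fin n → ℝ) → (Fin p → ℝ) × ℝ :=
      fun z => (fun i => (n:ℝ) * b i - ∑ j, F i j * z j, ∑ j, z j * c j) with hφdef
    have hφcont : Continuous φ := by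
      refine Continuous.prodMk ?_ ?_
      · exact continuous_pi fun i => continuous_const.sub
          (continuous_finset_sum _ fun j _ => continuous_const.mul (continuous_apply j))
      · exact continuous_finset_sum _ fun j _ => (continuous_apply j).mul continuous_const
    set C : Set ((Fin p → ℝ) × ℝ) := {q | (∀ i, 0 ≤ q.1 i) ∧ q.2 ≤ 0} with hCdef
    have hCclosed : IsClosed C := by
      have hCeq : C = (⋂ i, {q : (Fin p → ℝ) × ℝ | 0 ≤ q.1 i}) ∩ {q | q.2 ≤ 0} := by
        ext q; simp [hCdef, Set.mem_iInter]
      rw [hCeq]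
      exact (isClosed_iInter fun i =>
        isClosed_le continuous_const (by fun_prop)).inter
        (isClosed_le continuous_snd continuous_const)
    have hCconv : Convex ℝ C := by
      rintro q hq r hr s t hs ht hst
      refine ⟨fun i => ?_, ?_⟩
      · simp only [Prod.fst_add, Prod.smul_fst, Pi.add_apply, Pi.smul_apply, smul_eq_mul]
        exact add_nonneg (mul_nonneg hs (hq.1 i)) (mul_nonneg ht (hr.1 i))
      · simp only [Prod.snd_add, Prod.smul_snd, smul_eq_mul]
        exact add_nonpos (mul_nonpos_of_nonneg_of_nonpos hs hq.2)
          (mul_nonpos_of_nonneg_of_nonpos ht hr.2)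
    set K : Set ((Fin p → ℝ) × ℝ) := φ '' Box with hKdef
    have hKcomp : IsCompact K := hBoxC.image hφcont
    have hKconv : Convex ℝ K := by
      rintro _ ⟨z1, hz1, rfl⟩ _ ⟨z2, hz2, rfl⟩ s t hs ht hst
      refine ⟨s • z1 + t • z2, hBoxconv hz1 hz2 hs ht hst, ?_⟩
      rw [Prod.ext_iff]
      constructor
      · funext i
        simp only [hφdef, Prod.fst_add, Prod.smul_fst, Pi.add_apply, Pi.smul_apply, smul_eq_mul]
        have e1 : ∑ j, F i j * (s * z1 j + t * z2 j)
            = s * ∑ j, F i j * z1 j + t * ∑ j, F i j * z2 j := by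
          rw [Finset.mul_sum, Finset.mul_sum, ← Finset.sum_add_distrib]
          exact Finset.sum_congr rfl fun j _ => by ring
        rw [e1]
        linear_combination (-(n:ℝ) * b i) * hst
      · simp only [hφdef, Prod.snd_add, Prod.smul_snd, smul_eq_mul]
        rw [Finset.mul_sum, Finset.mul_sum, ← Finset.sum_add_distrib]
        exact Finset.sum_congr rfl fun j _ => by
          simp only [Pi.add_apply, Pi.smul_apply, smul_eq_mul]; ring
    have hK'closed : IsClosed (K + C) := hCclosed.add_left_of_isCompact hKcomp
    have hK'conv : Convex ℝ (K + C) := hKconv.add hCconv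
    have hq : ((0 : Fin p → ℝ), P + ε) ∉ K + C := by
      intro h
      rw [Set.mem_add] at h
      obtain ⟨x, hx, y, hy, hxy⟩ := h
      obtain ⟨z, hzB, rfl⟩ := hx
      have h1 : ∀ i, ((n:ℝ) * b i - ∑ j, F i j * z j) + y.1 i = 0 := by
        intro i
        have := congrArg Prod.fst hxy
        exact congrFun this i
      have h2 : (∑ j, z j * c j) + y.2 = P + ε := congrArg Prod.snd hxy
      have hzZ : z ∈ ZSet p n F b := by
        refine ⟨(hBoxmem z).1 hzB, fun i => ?_⟩
        have hy1 := hy.1 i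
        have hSi : (n:ℝ) * b i ≤ ∑ j, F i j * z j := by linarith [h1 i]
        have : b i = (1/(n:ℝ)) * ((n:ℝ) * b i) := by field_simp
        rw [this]
        exact mul_le_mul_of_nonneg_left hSi (by positivity)
      have := hPmem z hzZ
      have hy2 := hy.2
      linarith
    obtain ⟨f, β, hfK', hβ⟩ := geometric_hahn_banach_closed_point hK'conv hK'closed hq
    set α : Fin p → ℝ := fun i => f ((Pi.single i 1 : Fin p → ℝ), (0:ℝ)) with hαdef
    set μ : ℝ := f ((0 : Fin p → ℝ), (1:ℝ)) with hμdef
    have hexp : ∀ (u : Fin p → ℝ) (t : ℝ), f (u, t) = (∑ i, u i * α i) + t * μ := by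
      intro u t
      have hdecomp : ((u, t) : (Fin p → ℝ) × ℝ)
          = (∑ i, u i • (((Pi.single i 1 : Fin p → ℝ), (0:ℝ)) : (Fin p → ℝ) × ℝ))
            + t • (((0 : Fin p → ℝ), (1:ℝ)) : (Fin p → ℝ) × ℝ) := by
        rw [Prod.ext_iff]
        constructor
        · simp only [Prod.fst_add, Prod.fst_sum, Prod.smul_fst, smul_eq_mul, Prod.smul_snd]
          funext k
          simp [Pi.single_apply, Finset.sum_apply, Finset.sum_ite_eq]
        · simp [Prod.snd_sum]
      rw [hdecomp, map_add, map_sum]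
      simp only [map_smul, smul_eq_mul]
      rfl
    have hmemK' : ∀ z ∈ Box, ∀ (u : Fin p → ℝ) (t : ℝ),
        (∀ i, (n:ℝ) * b i - ∑ j, F i j * z j ≤ u i) → t ≤ ∑ j, z j * c j →
        (∑ i, u i * α i) + t * μ < β := by
      intro z hz u t hu ht
      rw [← hexp]
      apply hfK'
      rw [Set.mem_add]
      refine ⟨φ z, ⟨z, hz, rfl⟩,
        (fun i => u i - ((n:ℝ) * b i - ∑ j, F i j * z j), t - ∑ j, z j * c j),
        ⟨fun i => sub_nonneg.mpr (hu i), sub_nonpos.mpr ht⟩, ?_⟩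
      rw [Prod.ext_iff]
      constructor
      · funext i
        simp only [hφdef, Prod.fst_add, Pi.add_apply]
        ring
      · simp only [hφdef, Prod.snd_add]
        ring
    -- base point
    set zb : Fin n → ℝ := fun _ => 0 with hzbdef
    have hzbB : zb ∈ Box := (hBoxmem zb).2 fun j => by norm_num [hzbdef]
    set u0 : Fin p → ℝ := fun i => (n:ℝ) * b i - ∑ j, F i j * zb j with hu0def
    set t0 : ℝ := ∑ j, zb j * c j with ht0def
    set f0 : ℝ := (∑ i, u0 i * α i) + t0 * μ with hf0def
    have hf0 : f0 < β := hmemK' zb hzbB u0 t0 (fun i => le_rfl) le_rfl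
    have hμnn : 0 ≤ μ := by
      by_contra h
      push_neg at h
      have hμne : μ ≠ 0 := ne_of_lt h
      set lam : ℝ := (β - f0) / (-μ) + 1 with hlamdef
      have hlampos : 0 < lam := by
        have h1 : 0 < β - f0 := by linarith
        have h2 : 0 < -μ := by linarith
        positivity
      have hkey := hmemK' zb hzbB u0 (t0 - lam) (fun i => le_rfl) (by linarith)
      have hval : (∑ i, u0 i * α i) + (t0 - lam) * μ = f0 - lam * μ := by
        rw [hf0def]; ring
      rw [hval] at hkey
      have hlm : lam * μ = -(β - f0) + μ := by
        have hne : (-μ) ≠ 0 := by simpa using hμne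
        have h1 : (β - f0) / (-μ) * μ = -(β - f0) := by
          calc (β - f0) / (-μ) * μ = -((β - f0) / (-μ) * (-μ)) := by ring
            _ = -(β - f0) := by rw [div_mul_cancel₀ _ hne]
        rw [hlamdef, add_mul, one_mul, h1]
      rw [hlm] at hkey
      linarith
    have hα : ∀ i, α i ≤ 0 := by
      intro i
      by_contra h
      push_neg at h
      set lam : ℝ := (β - f0) / α i + 1 with hlamdef
      have hlampos : 0 < lam := by
        have h1 : 0 < β - f0 := by linarith
        positivity
      set u1 : Fin p → ℝ := fun k => u0 k + (if k = i then lam else 0) with hu1def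
      have hu1 : ∀ k, (n:ℝ) * b k - ∑ j, F k j * zb j ≤ u1 k := by
        intro k
        rw [hu1def]
        simp only [hu0def]
        split_ifs with hki
        · linarith
        · simp
      have hkey := hmemK' zb hzbB u1 t0 hu1 le_rfl
      have hsum : ∑ k, u1 k * α k = (∑ k, u0 k * α k) + lam * α i := by
        rw [hu1def]
        have : ∀ k, (u0 k + (if k = i then lam else 0)) * α k
            = u0 k * α k + (if k = i then lam * α k else 0) := by
          intro k; split_ifs <;> ring
        rw [Finset.sum_congr rfl fun k _ => this k, Finset.sum_add_distrib,
          Finset.sum_ite_eq' Finset.univ i (fun k => lam * α k)]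
        simp
      rw [hsum] at hkey
      have hne : α i ≠ 0 := ne_of_gt h
      have hlm : lam * α i = (β - f0) + α i := by
        rw [hlamdef, add_mul, one_mul, div_mul_cancel₀ _ hne]
      nlinarith [hkey, hlm]
    have hβ2 : β < (P + ε) * μ := by
      have := hβ
      rw [hexp] at this
      simpa using this
    have hμpos : 0 < μ := by
      rcases lt_or_eq_of_le hμnn with h | h
      · exact h
      · exfalso
        have hz₀B : z₀ ∈ Box := (hBoxmem z₀).2 hz₀.1
        set us : Fin p → ℝ := fun i => (n:ℝ) * b i - ∑ j, F i j * z₀ j with husdef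
        have hkey := hmemK' z₀ hz₀B us (∑ j, z₀ j * c j) (fun i => le_rfl) le_rfl
        rw [← h] at hkey
        have hsum_nonneg : 0 ≤ ∑ i, us i * α i := by
          refine Finset.sum_nonneg fun i _ => ?_
          have hus : us i ≤ 0 := by
            rw [husdef]
            have hbi := hz₀.2 i
            have h2 : (n:ℝ) * b i ≤ ∑ j, F i j * z₀ j := by
              have h3 := mul_le_mul_of_nonneg_left hbi (le_of_lt hnR)
              rw [show (n:ℝ) * ((1/(n:ℝ)) * ∑ j, F i j * z₀ j) = ∑ j, F i j * z₀ j by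
                field_simp] at h3
              linarith
            simp only
            linarith
          nlinarith [hus, hα i]
        rw [← h] at hβ2
        simp only [mul_zero] at hkey hβ2
        linarith
    set σ : Fin p → ℝ := fun i => -α i / μ with hσdef
    have hσ : ∀ i, 0 ≤ σ i := fun i => div_nonneg (neg_nonneg.mpr (hα i)) hμpos.le
    have hmain : ∀ z ∈ Box,
        (∑ j, z j * c j) + (∑ i, σ i * (∑ j, F i j * z j)) - (n:ℝ) * ∑ i, b i * σ i
          ≤ P + ε := by
      intro z hz
      have hkey := hmemK' z hz (fun i => (n:ℝ) * b i - ∑ j, F i j * z j) (∑ j, z j * c j)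
        (fun i => le_rfl) le_rfl
      set W : ℝ := ∑ i, ((n:ℝ) * b i - ∑ j, F i j * z j) * α i with hWdef
      set T : ℝ := ∑ j, z j * c j with hTdef
      have hW : (∑ i, σ i * (∑ j, F i j * z j)) - (n:ℝ) * ∑ i, b i * σ i = W / μ := by
        rw [hWdef, Finset.mul_sum, ← Finset.sum_sub_distrib, Finset.sum_div]
        refine Finset.sum_congr rfl fun i _ => ?_
        rw [hσdef]
        field_simp
        ring
      have hWT : W + T * μ < β := hkey
      have hstep : W < ((P + ε) - T) * μ := by nlinarith [hβ2]
      have hdiv := (div_lt_iff₀ hμpos).mpr hstep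
      linarith [hW]
    -- plug in the sign vector
    set zs : Fin n → ℝ := fun j => if 0 ≤ c j + ∑ i, σ i * F i j then 1 else -1 with hzsdef
    have hzsB : zs ∈ Box := (hBoxmem zs).2 fun j => by
      simp only [hzsdef]; split_ifs <;> norm_num
    have habs : ∑ j, zs j * c j + ∑ i, σ i * (∑ j, F i j * zs j)
        = ∑ j, |c j + ∑ i, σ i * F i j| := by
      rw [← swap_sum, ← Finset.sum_add_distrib]
      refine Finset.sum_congr rfl fun j _ => ?_
      have : zs j * c j + zs j * (∑ i, σ i * F i j) = zs j * (c j + ∑ i, σ i * F i j) := by ring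
      rw [this, hzsdef]
      by_cases h : 0 ≤ c j + ∑ i, σ i * F i j
      · simp only [h, if_true, one_mul]
        exact (abs_of_nonneg h).symm
      · simp only [h, if_false]
        push_neg at h
        rw [abs_of_neg h]
        ring
    have hfinal := hmain zs hzsB
    refine ⟨-((n:ℝ) * ∑ i, b i * σ i) + ∑ j, |c j + ∑ i, σ i * F i j|, ⟨σ, hσ, rfl⟩, ?_⟩
    linarith [habs, hfinal]
  -- combine weak and strong duality
  apply le_antisymm
  · exact csSup_le hPne fun w hw => le_csInf hDne fun v hv => hweak w hw v hv
  · by_contra h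
    push_neg at h
    obtain ⟨w, hw, hwle⟩ := hstrong ((sInf Dual - P) / 2) (by linarith)
    have := csInf_le hDbdd hw
    linarith

lemma affine_sSup {k : ℝ} (hk : 0 < k) (a : ℝ) {S : Set ℝ} (hne : S.Nonempty)
    (hbdd : BddAbove S) : sSup ((fun w => a + k * w) '' S) = a + k * sSup S := by
  refine IsLUB.csSup_eq ⟨?_, ?_⟩ (hne.image _)
  · rintro _ ⟨w, hw, rfl⟩
    exact add_le_add (le_refl a) (mul_le_mul_of_nonneg_left (le_csSup hbdd hw) hk.le)
  · intro y hy
    have h1 : ∀ w ∈ S, w ≤ (y - a) / k := by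
      intro w hw
      have h0 : a + k * w ≤ y := hy ⟨w, hw, rfl⟩
      rw [le_div_iff₀ hk]
      nlinarith
    have h2 : sSup S ≤ (y - a) / k := csSup_le hne h1
    have h3 : k * sSup S ≤ k * ((y - a) / k) := mul_le_mul_of_nonneg_left h2 hk.le
    rw [mul_div_cancel₀ _ (ne_of_gt hk)] at h3
    linarith

lemma affine_sInf {k : ℝ} (hk : 0 < k) (a : ℝ) {S : Set ℝ} (hne : S.Nonempty)
    (hbdd : BddBelow S) : sInf ((fun w => a + k * w) '' S) = a + k * sInf S := by
  refine IsGLB.csInf_eq ⟨?_, ?_⟩ (hne.image _)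
  · rintro _ ⟨w, hw, rfl⟩
    exact add_le_add (le_refl a) (mul_le_mul_of_nonneg_left (csInf_le hbdd hw) hk.le)
  · intro y hy
    have h1 : ∀ w ∈ S, (y - a) / k ≤ w := by
      intro w hw
      have h0 : y ≤ a + k * w := hy ⟨w, hw, rfl⟩
      rw [div_le_iff₀ hk]
      nlinarith
    have h2 : (y - a) / k ≤ sInf S := le_csInf hne h1
    have h3 : k * ((y - a) / k) ≤ k * sInf S := mul_le_mul_of_nonneg_left h2 hk.le
    rw [mul_div_cancel₀ _ (ne_of_gt hk)] at h3
    linarith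

noncomputable def ghat (lp lm Γinv : ℝ → ℝ) (m : ℝ) : ℝ :=
  if m ≤ lm (-1) - lp (-1) then -1
  else if m < lm 1 - lp 1 then Γinv m
  else 1

lemma psi_le (lp lm Γinv : ℝ → ℝ)
    (hlpm : AntitoneOn lp (Set.Icc (-1) 1)) (hlmm : MonotoneOn lm (Set.Icc (-1) 1))
    (hmono : StrictMonoOn (fun x => lm x - lp x) (Set.Icc (-1) 1))
    (hGinvMem : ∀ m ∈ Set.Icc (lm (-1) - lp (-1)) (lm 1 - lp 1), Γinv m ∈ Set.Icc (-1:ℝ) 1)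
    (hGinvRight : ∀ m ∈ Set.Icc (lm (-1) - lp (-1)) (lm 1 - lp 1), lm (Γinv m) - lp (Γinv m) = m)
    (m g : ℝ) (hg : g ∈ Set.Icc (-1:ℝ) 1) :
    Psi lp lm Γinv m ≤ |(lp g - lm g) + m| + (lp g + lm g) := by
  have hm1 : (-1:ℝ) ∈ Set.Icc (-1:ℝ) 1 := Set.left_mem_Icc.mpr (by norm_num)
  have hp1 : (1:ℝ) ∈ Set.Icc (-1:ℝ) 1 := Set.right_mem_Icc.mpr (by norm_num)
  rw [Psi]
  split_ifs with h1 h2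
  · -- m ≤ Γ(-1)
    have hlm1 : lm (-1) ≤ lm g := hlmm hm1 hg hg.1
    linarith [neg_le_abs ((lp g - lm g) + m)]
  · -- Γ(-1) < m < Γ(1)
    push_neg at h1
    have hmI : m ∈ Set.Icc (lm (-1) - lp (-1)) (lm 1 - lp 1) := ⟨le_of_lt h1, le_of_lt h2⟩
    have hgh : Γinv m ∈ Set.Icc (-1:ℝ) 1 := hGinvMem m hmI
    have hΓgh : lm (Γinv m) - lp (Γinv m) = m := hGinvRight m hmI
    rcases le_or_gt (lm g - lp g) m with hc | hc
    · have hggh : g ≤ Γinv m := by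
        by_contra hcon
        push_neg at hcon
        have hx : lm (Γinv m) - lp (Γinv m) < lm g - lp g := hmono hgh hg hcon
        linarith
      have := hlpm hg hgh hggh
      linarith [le_abs_self ((lp g - lm g) + m)]
    · have hghg : Γinv m ≤ g := by
        by_contra hcon
        push_neg at hcon
        have hx : lm g - lp g < lm (Γinv m) - lp (Γinv m) := hmono hg hgh hcon
        linarith
      have := hlmm hgh hg hghg
      linarith [neg_le_abs ((lp g - lm g) + m)]
  · -- m ≥ Γ(1)
    push_neg at h2
    have hlp1 : lp 1 ≤ lp g := hlpm hg hp1 hg.2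
    have hΓg : lm g - lp g ≤ lm 1 - lp 1 := by
      rcases eq_or_lt_of_le hg.2 with he | hl
      · rw [he]
      · exact le_of_lt (hmono hg hp1 hl : lm g - lp g < lm 1 - lp 1)
    linarith [le_abs_self ((lp g - lm g) + m)]

lemma psi_eq (lp lm Γinv : ℝ → ℝ)
    (hGinvMem : ∀ m ∈ Set.Icc (lm (-1) - lp (-1)) (lm 1 - lp 1), Γinv m ∈ Set.Icc (-1:ℝ) 1)
    (hGinvRight : ∀ m ∈ Set.Icc (lm (-1) - lp (-1)) (lm 1 - lp 1), lm (Γinv m) - lp (Γinv m) = m)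
    (hlt : lm (-1) - lp (-1) < lm 1 - lp 1) (m : ℝ) :
    ghat lp lm Γinv m ∈ Set.Icc (-1:ℝ) 1 ∧
      Psi lp lm Γinv m
        = |(lp (ghat lp lm Γinv m) - lm (ghat lp lm Γinv m)) + m|
          + (lp (ghat lp lm Γinv m) + lm (ghat lp lm Γinv m)) := by
  rw [Psi, ghat]
  split_ifs with h1 h2
  · refine ⟨⟨le_rfl, by norm_num⟩, ?_⟩
    rw [abs_of_nonpos (show lp (-1) - lm (-1) + m ≤ 0 by linarith)]
    ring
  · push_neg at h1
    have hmI : m ∈ Set.Icc (lm (-1) - lp (-1)) (lm 1 - lp 1) := ⟨le_of_lt h1, le_of_lt h2⟩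
    refine ⟨hGinvMem m hmI, ?_⟩
    have hΓ := hGinvRight m hmI
    rw [show (lp (Γinv m) - lm (Γinv m)) + m = m - (lm (Γinv m) - lp (Γinv m)) by ring, hΓ]
    simp
  · push_neg at h2
    refine ⟨⟨by norm_num, le_rfl⟩, ?_⟩
    rw [abs_of_nonneg (show (0:ℝ) ≤ lp 1 - lm 1 + m by linarith)]
    ring

lemma loss_affine (lp lm : ℝ → ℝ) {n : ℕ} (hn : 0 < n) (z g : Fin n → ℝ) :
    lossV lp lm n z g = (∑ j, (lp (g j) + lm (g j))) / (2*(n:ℝ))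
      + (1/(2*(n:ℝ))) * (∑ j, z j * (lp (g j) - lm (g j))) := by
  have hnR : (0:ℝ) < n := Nat.cast_pos.mpr hn
  rw [lossV]
  have hsum : ∑ j, ((1 + z j)/2 * lp (g j) + (1 - z j)/2 * lm (g j))
      = (1/2) * ((∑ j, (lp (g j) + lm (g j))) + ∑ j, z j * (lp (g j) - lm (g j))) := by
    rw [mul_add, Finset.mul_sum, Finset.mul_sum, ← Finset.sum_add_distrib]
    exact Finset.sum_congr rfl fun j _ => by ring
  rw [hsum]
  field_simp

lemma inner_dual {p n : ℕ} (hn : 0 < n) (F : Fin p → Fin n → ℝ) (b : Fin p → ℝ)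
    (lp lm : ℝ → ℝ) (hZ : (ZSet p n F b).Nonempty) (g : Fin n → ℝ) :
    sSup {w | ∃ z ∈ ZSet p n F b, w = lossV lp lm n z g} =
      sInf {v | ∃ σ : Fin p → ℝ, (∀ i, 0 ≤ σ i) ∧
        v = (∑ j, (lp (g j) + lm (g j))) / (2*(n:ℝ))
          + (1/(2*(n:ℝ))) * (-((n:ℝ) * ∑ i, b i * σ i)
            + ∑ j, |(lp (g j) - lm (g j)) + ∑ i, σ i * F i j|)} := by
  classical
  obtain ⟨z₀, hz₀⟩ := hZ
  have hnR : (0:ℝ) < n := Nat.cast_pos.mpr hn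
  set c : Fin n → ℝ := fun j => lp (g j) - lm (g j) with hcdef
  set a : ℝ := (∑ j, (lp (g j) + lm (g j))) / (2*(n:ℝ)) with hadef
  set k : ℝ := 1/(2*(n:ℝ)) with hkdef
  have hk : 0 < k := by rw [hkdef]; positivity
  set Prim := {w | ∃ z ∈ ZSet p n F b, w = ∑ j, z j * c j} with hPrimDef
  set Dual := {w | ∃ σ : Fin p → ℝ, (∀ i, 0 ≤ σ i) ∧
      w = -((n:ℝ) * ∑ i, b i * σ i) + ∑ j, |c j + ∑ i, σ i * F i j|} with hDualDef
  have hPne : Prim.Nonempty := ⟨_, z₀, hz₀, rfl⟩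
  have hPbdd : BddAbove Prim := by
    refine ⟨∑ j, |c j|, ?_⟩
    rintro w ⟨z, hz, rfl⟩
    refine Finset.sum_le_sum fun j _ => ?_
    have hz1 : |z j| ≤ 1 := abs_le.mpr ⟨(hz.1 j).1, (hz.1 j).2⟩
    calc z j * c j ≤ |z j * c j| := le_abs_self _
      _ = |z j| * |c j| := abs_mul _ _
      _ ≤ 1 * |c j| := mul_le_mul_of_nonneg_right hz1 (abs_nonneg _)
      _ = |c j| := one_mul _
  have hDne : Dual.Nonempty := ⟨_, 0, fun i => le_rfl, rfl⟩
  have hDbdd : BddBelow Dual := by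
    refine ⟨∑ j, z₀ j * c j, ?_⟩
    rintro w ⟨σ, hσ, rfl⟩
    exact lp_weak hn F b c hz₀ hσ
  have hLS : {w | ∃ z ∈ ZSet p n F b, w = lossV lp lm n z g} = (fun w => a + k * w) '' Prim := by
    ext w
    constructor
    · rintro ⟨z, hz, rfl⟩
      exact ⟨∑ j, z j * c j, ⟨z, hz, rfl⟩, (loss_affine lp lm hn z g).symm⟩
    · rintro ⟨w', ⟨z, hz, rfl⟩, rfl⟩
      exact ⟨z, hz, (loss_affine lp lm hn z g).symm⟩
  have hDS : {v | ∃ σ : Fin p → ℝ, (∀ i, 0 ≤ σ i) ∧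
      v = a + k * (-((n:ℝ) * ∑ i, b i * σ i)
        + ∑ j, |(lp (g j) - lm (g j)) + ∑ i, σ i * F i j|)} = (fun w => a + k * w) '' Dual := by
    ext v
    constructor
    · rintro ⟨σ, hσ, rfl⟩
      exact ⟨_, ⟨σ, hσ, rfl⟩, rfl⟩
    · rintro ⟨w', ⟨σ, hσ, rfl⟩, rfl⟩
      exact ⟨σ, hσ, rfl⟩
  rw [hLS, hDS, affine_sSup hk a hPne hPbdd, affine_sInf hk a hDne hDbdd,
    lp_dual hn F b c ⟨z₀, hz₀⟩]

theorem stmt_7 (p n : ℕ) (hp : 0 < p) (hn : 0 < n)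
    (F : Fin p → Fin n → ℝ) (hF : ∀ i j, F i j ∈ Set.Icc (-1:ℝ) 1) (b : Fin p → ℝ)
    (lp lm lp' lm' lp'' lm'' Γinv : ℝ → ℝ)
    (hlpc : ContinuousOn lp (Set.Icc (-1) 1))
    (hlmc : ContinuousOn lm (Set.Icc (-1) 1))
    (hlpd : ∀ x ∈ Set.Ioo (-1:ℝ) 1, HasDerivAt lp (lp' x) x)
    (hlmd : ∀ x ∈ Set.Ioo (-1:ℝ) 1, HasDerivAt lm (lm' x) x)
    (hlpd2 : ∀ x ∈ Set.Ioo (-1:ℝ) 1, HasDerivAt lp' (lp'' x) x)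
    (hlmd2 : ∀ x ∈ Set.Ioo (-1:ℝ) 1, HasDerivAt lm' (lm'' x) x)
    (hlpm : AntitoneOn lp (Set.Icc (-1) 1))
    (hlmm : MonotoneOn lm (Set.Icc (-1) 1))
    (hslope : ∀ x ∈ Set.Ioo (-1:ℝ) 1, 0 < lm' x - lp' x)
    (hGinvMem : ∀ m ∈ Set.Icc (lm (-1) - lp (-1)) (lm 1 - lp 1), Γinv m ∈ Set.Icc (-1:ℝ) 1)
    (hGinvRight : ∀ m ∈ Set.Icc (lm (-1) - lp (-1)) (lm 1 - lp 1), lm (Γinv m) - lp (Γinv m) = m)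
    (hGinvLeft : ∀ g ∈ Set.Icc (-1:ℝ) 1, Γinv (lm g - lp g) = g)
    (hZ : (ZSet p n F b).Nonempty) :
    sInf {v : ℝ | ∃ g : Fin n → ℝ, (∀ j, g j ∈ Set.Icc (-1:ℝ) 1) ∧
        v = sSup {w : ℝ | ∃ z ∈ ZSet p n F b, w = lossV lp lm n z g}} =
      (1 / 2) * sInf {v : ℝ | ∃ σ : Fin p → ℝ, (∀ i, 0 ≤ σ i) ∧
        v = slack lp lm Γinv p n F b σ} := by
  classical
  obtain ⟨z₀, hz₀⟩ := hZ
  have hZ' : (ZSet p n F b).Nonempty := ⟨z₀, hz₀⟩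
  have hnR : (0:ℝ) < n := Nat.cast_pos.mpr hn
  have hm1 : (-1:ℝ) ∈ Set.Icc (-1:ℝ) 1 := Set.left_mem_Icc.mpr (by norm_num)
  have hp1 : (1:ℝ) ∈ Set.Icc (-1:ℝ) 1 := Set.right_mem_Icc.mpr (by norm_num)
  have hmono : StrictMonoOn (fun x => lm x - lp x) (Set.Icc (-1) 1) := by
    apply strictMonoOn_of_deriv_pos (convex_Icc _ _) (hlmc.sub hlpc)
    intro x hx
    rw [interior_Icc] at hx
    rw [((hlmd x hx).sub (hlpd x hx)).deriv]
    exact hslope x hx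
  have hΓlt : lm (-1) - lp (-1) < lm 1 - lp 1 := hmono hm1 hp1 (by norm_num)
  have hpsile := psi_le lp lm Γinv hlpm hlmm hmono hGinvMem hGinvRight
  have hpsieq := psi_eq lp lm Γinv hGinvMem hGinvRight hΓlt
  -- lower bound for losses
  obtain ⟨xp, hxpm, hxp⟩ := isCompact_Icc.exists_isMinOn
    (Set.nonempty_Icc.mpr (by norm_num : (-1:ℝ) ≤ 1)) hlpc
  obtain ⟨xm, hxmm, hxm⟩ := isCompact_Icc.exists_isMinOn
    (Set.nonempty_Icc.mpr (by norm_num : (-1:ℝ) ≤ 1)) hlmc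
  set L : ℝ := min (lp xp) 0 + min (lm xm) 0 with hLdef
  have hlossLB : ∀ g : Fin n → ℝ, (∀ j, g j ∈ Set.Icc (-1:ℝ) 1) →
      L ≤ lossV lp lm n z₀ g := by
    intro g hg
    rw [lossV]
    have hterm : ∀ j : Fin n, L ≤ (1 + z₀ j)/2 * lp (g j) + (1 - z₀ j)/2 * lm (g j) := by
      intro j
      have hz1 := hz₀.1 j
      have hlpj : lp xp ≤ lp (g j) := isMinOn_iff.mp hxp _ (hg j)
      have hlmj : lm xm ≤ lm (g j) := isMinOn_iff.mp hxm _ (hg j)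
      have h1 : min (lp xp) 0 ≤ (1 + z₀ j)/2 * lp (g j) := by
        rcases le_or_gt 0 (lp (g j)) with h | h
        · have : (0:ℝ) ≤ (1 + z₀ j)/2 * lp (g j) := by nlinarith [hz1.1]
          exact le_trans (min_le_right _ _) this
        · have : (1:ℝ) * lp (g j) ≤ (1 + z₀ j)/2 * lp (g j) := by nlinarith [hz1.2]
          calc min (lp xp) 0 ≤ lp xp := min_le_left _ _
            _ ≤ lp (g j) := hlpj
            _ = 1 * lp (g j) := (one_mul _).symm
            _ ≤ _ := this
      have h2 : min (lm xm) 0 ≤ (1 - z₀ j)/2 * lm (g j) := by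
        rcases le_or_gt 0 (lm (g j)) with h | h
        · have : (0:ℝ) ≤ (1 - z₀ j)/2 * lm (g j) := by nlinarith [hz1.2]
          exact le_trans (min_le_right _ _) this
        · have : (1:ℝ) * lm (g j) ≤ (1 - z₀ j)/2 * lm (g j) := by nlinarith [hz1.1]
          calc min (lm xm) 0 ≤ lm xm := min_le_left _ _
            _ ≤ lm (g j) := hlmj
            _ = 1 * lm (g j) := (one_mul _).symm
            _ ≤ _ := this
      rw [hLdef]; linarith
    have hsum : (n:ℝ) * L ≤ ∑ j, ((1 + z₀ j)/2 * lp (g j) + (1 - z₀ j)/2 * lm (g j)) := by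
      have hconst : (n:ℝ) * L = ∑ _j : Fin n, L := by
        rw [Finset.sum_const, Finset.card_univ, Fintype.card_fin, nsmul_eq_mul]
      rw [hconst]
      exact Finset.sum_le_sum fun j _ => hterm j
    calc L = (1/(n:ℝ)) * ((n:ℝ) * L) := by field_simp
      _ ≤ _ := mul_le_mul_of_nonneg_left hsum (by positivity)
  -- the per-g dual set
  set D : (Fin n → ℝ) → Set ℝ := fun g => {v | ∃ σ : Fin p → ℝ, (∀ i, 0 ≤ σ i) ∧
      v = (∑ j, (lp (g j) + lm (g j))) / (2*(n:ℝ))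
        + (1/(2*(n:ℝ))) * (-((n:ℝ) * ∑ i, b i * σ i)
          + ∑ j, |(lp (g j) - lm (g j)) + ∑ i, σ i * F i j|)} with hDdef
  have hkey : ∀ g : Fin n → ℝ,
      sSup {w | ∃ z ∈ ZSet p n F b, w = lossV lp lm n z g} = sInf (D g) :=
    fun g => inner_dual hn F b lp lm hZ' g
  have hDne : ∀ g, (D g).Nonempty := fun g => ⟨_, 0, fun i => le_rfl, rfl⟩
  have hDlb : ∀ g : Fin n → ℝ, ∀ v ∈ D g, lossV lp lm n z₀ g ≤ v := by
    intro g v hv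
    obtain ⟨σ, hσ, rfl⟩ := hv
    rw [loss_affine lp lm hn z₀ g]
    refine add_le_add le_rfl (mul_le_mul_of_nonneg_left ?_ (by positivity))
    exact lp_weak hn F b (fun j => lp (g j) - lm (g j)) hz₀ hσ
  have hDbdd : ∀ g, BddBelow (D g) := fun g => ⟨lossV lp lm n z₀ g, fun v hv => hDlb g v hv⟩
  -- the adversarially optimal g for a given σ
  set G : (Fin p → ℝ) → Fin n → ℝ := fun σ j => ghat lp lm Γinv (∑ i, σ i * F i j) with hGdef
  have hGmem : ∀ σ, ∀ j, G σ j ∈ Set.Icc (-1:ℝ) 1 := fun σ j => (hpsieq _).1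
  have hslack_eq : ∀ σ : Fin p → ℝ,
      slack lp lm Γinv p n F b σ
        = 2 * ((∑ j, (lp (G σ j) + lm (G σ j))) / (2*(n:ℝ))
          + (1/(2*(n:ℝ))) * (-((n:ℝ) * ∑ i, b i * σ i)
            + ∑ j, |(lp (G σ j) - lm (G σ j)) + ∑ i, σ i * F i j|)) := by
    intro σ
    rw [slack]
    have hPsiEq : ∀ j : Fin n, Psi lp lm Γinv (∑ i, σ i * F i j)
        = |(lp (G σ j) - lm (G σ j)) + ∑ i, σ i * F i j|
          + (lp (G σ j) + lm (G σ j)) := fun j => (hpsieq _).2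
    rw [Finset.sum_congr rfl fun j _ => hPsiEq j, Finset.sum_add_distrib]
    field_simp
    ring
  have hslack_le : ∀ (σ : Fin p → ℝ) (g : Fin n → ℝ), (∀ j, g j ∈ Set.Icc (-1:ℝ) 1) →
      slack lp lm Γinv p n F b σ
        ≤ 2 * ((∑ j, (lp (g j) + lm (g j))) / (2*(n:ℝ))
          + (1/(2*(n:ℝ))) * (-((n:ℝ) * ∑ i, b i * σ i)
            + ∑ j, |(lp (g j) - lm (g j)) + ∑ i, σ i * F i j|)) := by
    intro σ g hg
    rw [slack]
    have h1 : ∑ j, Psi lp lm Γinv (∑ i, σ i * F i j)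
        ≤ ∑ j, (|(lp (g j) - lm (g j)) + ∑ i, σ i * F i j| + (lp (g j) + lm (g j))) :=
      Finset.sum_le_sum fun j _ => hpsile (∑ i, σ i * F i j) (g j) (hg j)
    have h2 : -(∑ i, b i * σ i) + (1/(n:ℝ)) * ∑ j, Psi lp lm Γinv (∑ i, σ i * F i j)
        ≤ -(∑ i, b i * σ i) + (1/(n:ℝ)) * ∑ j,
          (|(lp (g j) - lm (g j)) + ∑ i, σ i * F i j| + (lp (g j) + lm (g j))) :=
      add_le_add le_rfl (mul_le_mul_of_nonneg_left h1 (by positivity))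
    have h3 : -(∑ i, b i * σ i) + (1/(n:ℝ)) * ∑ j,
          (|(lp (g j) - lm (g j)) + ∑ i, σ i * F i j| + (lp (g j) + lm (g j)))
        = 2 * ((∑ j, (lp (g j) + lm (g j))) / (2*(n:ℝ))
          + (1/(2*(n:ℝ))) * (-((n:ℝ) * ∑ i, b i * σ i)
            + ∑ j, |(lp (g j) - lm (g j)) + ∑ i, σ i * F i j|)) := by
      rw [Finset.sum_add_distrib]
      field_simp
      ring
    linarith
  -- assemble
  set A := {v : ℝ | ∃ g : Fin n → ℝ, (∀ j, g j ∈ Set.Icc (-1:ℝ) 1) ∧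
      v = sSup {w : ℝ | ∃ z ∈ ZSet p n F b, w = lossV lp lm n z g}} with hAdef
  set B := {v : ℝ | ∃ σ : Fin p → ℝ, (∀ i, 0 ≤ σ i) ∧
      v = slack lp lm Γinv p n F b σ} with hBdef
  have hBne : B.Nonempty := ⟨_, 0, fun i => le_rfl, rfl⟩
  have hBlb : ∀ w ∈ B, 2 * L ≤ w := by
    rintro w ⟨σ, hσ, rfl⟩
    rw [hslack_eq σ]
    have hvmem : (∑ j, (lp (G σ j) + lm (G σ j))) / (2*(n:ℝ))
        + (1/(2*(n:ℝ))) * (-((n:ℝ) * ∑ i, b i * σ i)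
          + ∑ j, |(lp (G σ j) - lm (G σ j)) + ∑ i, σ i * F i j|) ∈ D (G σ) :=
      ⟨σ, hσ, rfl⟩
    have h1 := hDlb (G σ) _ hvmem
    have h2 := hlossLB (G σ) (hGmem σ)
    linarith
  have hBbdd : BddBelow B := ⟨2 * L, hBlb⟩
  have hA_lb : ∀ v ∈ A, (1/2) * sInf B ≤ v := by
    rintro v ⟨g, hg, rfl⟩
    rw [hkey g]
    refine le_csInf (hDne g) ?_
    rintro w ⟨σ, hσ, rfl⟩
    have h1 : sInf B ≤ slack lp lm Γinv p n F b σ := csInf_le hBbdd ⟨σ, hσ, rfl⟩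
    have h2 := hslack_le σ g hg
    linarith
  have hAne : A.Nonempty := ⟨_, (fun _ => (0:ℝ)), fun j => by norm_num, rfl⟩
  have hAbdd : BddBelow A := ⟨(1/2) * sInf B, hA_lb⟩
  have hge : (1/2) * sInf B ≤ sInf A := le_csInf hAne hA_lb
  have hle : 2 * sInf A ≤ sInf B := by
    refine le_csInf hBne ?_
    rintro w ⟨σ, hσ, rfl⟩
    have hvA : sSup {w : ℝ | ∃ z ∈ ZSet p n F b, w = lossV lp lm n z (G σ)} ∈ A :=
      ⟨G σ, hGmem σ, rfl⟩
    have h1 : sInf A ≤ sSup {w : ℝ | ∃ z ∈ ZSet p n F b, w = lossV lp lm n z (G σ)} :=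
      csInf_le hAbdd hvA
    have h2 := hkey (G σ)
    have h3 : sInf (D (G σ)) ≤ (∑ j, (lp (G σ j) + lm (G σ j))) / (2*(n:ℝ))
        + (1/(2*(n:ℝ))) * (-((n:ℝ) * ∑ i, b i * σ i)
          + ∑ j, |(lp (G σ j) - lm (G σ j)) + ∑ i, σ i * F i j|) :=
      csInf_le (hDbdd (G σ)) ⟨σ, hσ, rfl⟩
    have h4 := hslack_eq σ
    linarith
  linarith
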